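/- arXiv:1604.03579 — 4 statements merged into one kernel-verified Lean document; each statement's English description precedes it below -/
import Mathlib

section
/- Let y be a twice-differentiable real function of x with y ≠ 0 satisfying the Painlevé III equation with β = δ = 0, i.e. y'' = (y')²/y − y'/x + α y²/x + γ y³ (for x > 0). Then the function I(x) = x²(y'/y)² + 2x·y'/y − 2αxy − γx²y² is constant, i.e. its derivative with respect to x vanishes. -/
/-- Painlevé III with β = δ = 0: the quantity
`I(x) = x²(y'/y)² + 2x·y'/y − 2αxy − γx²y²` is a first integral. -/
theorem painleveIII_first_integral (α γ : ℝ) (y y' : ℝ → ℝ)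
    (hy : ∀ x ∈ Set.Ioi (0:ℝ), y x ≠ 0)
    (hd1 : ∀ x ∈ Set.Ioi (0:ℝ), HasDerivAt y (y' x) x)
    (hd2 : ∀ x ∈ Set.Ioi (0:ℝ), HasDerivAt y'
      ((y' x)^2 / y x - y' x / x + α * (y x)^2 / x + γ * (y x)^3) x) :
    ∀ x ∈ Set.Ioi (0:ℝ), HasDerivAt
      (fun x => x^2 * (y' x / y x)^2 + 2 * x * (y' x / y x)
        - 2 * α * x * y x - γ * x^2 * (y x)^2) 0 x := by
  intro x hx
  have hx0 : x ≠ 0 := ne_of_gt hx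
  have hyx := hy x hx
  have h1 := hd1 x hx
  have h2 := hd2 x hx
  have hq : HasDerivAt (fun t => y' t / y t)
      ((((y' x)^2 / y x - y' x / x + α * (y x)^2 / x + γ * (y x)^3) * y x
        - y' x * y' x) / (y x)^2) x := h2.div h1 hyx
  have H :=
    ((((hasDerivAt_pow 2 x).mul (hq.pow 2)).add
      (((hasDerivAt_id x).const_mul 2).mul hq)).sub
      (((hasDerivAt_id x).const_mul (2 * α)).mul h1)).sub
      (((hasDerivAt_pow 2 x).const_mul γ).mul (h1.pow 2))
  convert H using 1
  · rfl
  · rfl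
  · funext t
    simp only [Pi.add_apply, Pi.sub_apply, Pi.mul_apply, Pi.pow_apply, id]
  · simp only [Pi.pow_apply, id, Nat.cast_ofNat, Nat.reduceSub, pow_one]
    field_simp
    ring
end

section
/- Let y be a twice-differentiable real function of x with y ∉ {0, 1} and x > 0 satisfying the Painlevé V equation with γ = δ = 0, i.e. y'' = (1/(2y) + 1/(y−1))(y')² − y'/x + (y−1)²(αy + β/y)/x². Then I(x) = (1/y)·(x y'/(y−1))² + 2β/y − 2αy is constant in x. -/
/-- Painlevé V with γ = δ = 0: the quantity
`I(x) = (1/y)(xy'/(y−1))² + 2β/y − 2αy` is a first integral. -/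
theorem painleveV_first_integral (α β : ℝ) (y y' : ℝ → ℝ)
    (hy0 : ∀ x ∈ Set.Ioi (0:ℝ), y x ≠ 0)
    (hy1 : ∀ x ∈ Set.Ioi (0:ℝ), y x ≠ 1)
    (hd1 : ∀ x ∈ Set.Ioi (0:ℝ), HasDerivAt y (y' x) x)
    (hd2 : ∀ x ∈ Set.Ioi (0:ℝ), HasDerivAt y'
      ((1/(2 * y x) + 1/(y x - 1)) * (y' x)^2 - y' x / x
        + (y x - 1)^2 * (α * y x + β / y x) / x^2) x) :
    ∀ x ∈ Set.Ioi (0:ℝ), HasDerivAt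
      (fun x => (1 / y x) * (x * y' x / (y x - 1))^2 + 2 * β / y x - 2 * α * y x) 0 x := by
  intro x hx
  have hx0 : x ≠ 0 := ne_of_gt hx
  have hy0' := hy0 x hx
  have hy1' : y x - 1 ≠ 0 := sub_ne_zero.mpr (hy1 x hx)
  have h1 : HasDerivAt (fun x => (1:ℝ) / y x)
      ((0 * y x - 1 * y' x) / (y x)^2) x :=
    (hasDerivAt_const x 1).div (hd1 x hx) hy0'
  have h2 : HasDerivAt (fun x => x * y' x)
      (1 * y' x + x * ((1/(2 * y x) + 1/(y x - 1)) * (y' x)^2 - y' x / x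
        + (y x - 1)^2 * (α * y x + β / y x) / x^2)) x :=
    (hasDerivAt_id x).mul (hd2 x hx)
  have h3 : HasDerivAt (fun x => x * y' x / (y x - 1))
      (((1 * y' x + x * ((1/(2 * y x) + 1/(y x - 1)) * (y' x)^2 - y' x / x
        + (y x - 1)^2 * (α * y x + β / y x) / x^2)) * (y x - 1)
        - (x * y' x) * y' x) / (y x - 1)^2) x :=
    h2.div ((hd1 x hx).sub_const 1) hy1'
  have h4 := h3.pow 2
  have h5 := h1.mul h4
  have h6 : HasDerivAt (fun x => 2 * β / y x)
      ((0 * y x - 2 * β * y' x) / (y x)^2) x :=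
    (hasDerivAt_const x (2*β)).div (hd1 x hx) hy0'
  have h7 : HasDerivAt (fun x => 2 * α * y x) (2 * α * y' x) x :=
    (hd1 x hx).const_mul (2*α)
  have h := (h5.add h6).sub h7
  refine h.congr_deriv ?_
  norm_num only [Pi.pow_apply]
  field_simp
  ring
end

section
/- Let y be a twice-differentiable function satisfying y'' = (1 + (y')²)/(2y) on an interval, with y > 0. Then I₁(x) = (1 + (y'(x))²)/y(x) is constant. -/
/-- For `y'' = (1 + (y')²)/(2y)` (Ince XXXII), `I₁ = (1 + (y')²)/y`
is a first integral. -/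
theorem inceXXXII_first_integral_one (S : Set ℝ) (hS : IsOpen S)
    (y y' : ℝ → ℝ) (hy : ∀ x ∈ S, 0 < y x)
    (hd1 : ∀ x ∈ S, HasDerivAt y (y' x) x)
    (hd2 : ∀ x ∈ S, HasDerivAt y' ((1 + (y' x)^2) / (2 * y x)) x) :
    ∀ x ∈ S, HasDerivAt (fun x => (1 + (y' x)^2) / y x) 0 x := by
  intro x hx
  have hyx := (hy x hx).ne'
  have hnum : HasDerivAt (fun x => 1 + (y' x)^2)
      (2 * y' x * ((1 + (y' x)^2) / (2 * y x))) x := by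
    simpa [mul_comm] using ((hd2 x hx).pow 2).const_add 1
  have h := hnum.div (hd1 x hx) hyx
  refine h.congr_deriv ?_
  field_simp
  ring
end

section
/- Let y be a twice-differentiable function satisfying y'' = (1 + (y')²)/(2y) on an interval, with y > 0. Then I₂(x) = 2y'(x) − (x/y(x))(1 + (y'(x))²) is constant. -/
/-- For `y'' = (1 + (y')²)/(2y)` (Ince XXXII), `I₂ = 2y' − (x/y)(1 + (y')²)`
is a first integral. -/
theorem inceXXXII_first_integral_two (S : Set ℝ) (hS : IsOpen S)
    (y y' : ℝ → ℝ) (hy : ∀ x ∈ S, 0 < y x)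
    (hd1 : ∀ x ∈ S, HasDerivAt y (y' x) x)
    (hd2 : ∀ x ∈ S, HasDerivAt y' ((1 + (y' x)^2) / (2 * y x)) x) :
    ∀ x ∈ S, HasDerivAt (fun x => 2 * y' x - (x / y x) * (1 + (y' x)^2)) 0 x := by
  intro x hx
  have hy0 : y x ≠ 0 := (hy x hx).ne'
  have h1 := hd1 x hx
  have h2 := hd2 x hx
  have hdiv : HasDerivAt (fun x => x / y x) ((1 * y x - x * y' x) / (y x)^2) x :=
    (hasDerivAt_id x).div h1 hy0
  have hq : HasDerivAt (fun x => 1 + (y' x)^2)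
      (2 * y' x * ((1 + (y' x)^2) / (2 * y x))) x := by
    have := (hasDerivAt_const x (1:ℝ)).fun_add (h2.fun_pow 2)
    simpa [mul_comm, mul_assoc, mul_left_comm] using this
  have H := (h2.const_mul 2).fun_sub (hdiv.fun_mul hq)
  refine H.congr_deriv ?_
  field_simp
  ring
end
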